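/- Let G be a connected graph with n vertices and m edges, and let q(G) denote the largest eigenvalue of the signless Laplacian matrix Q(G) = D(G) + A(G). Then q(G) ≤ 2m/(n-1) + n - 2. -/

import Mathlib

open Matrix SimpleGraph Finset

noncomputable def signlessLaplacian {n : ℕ} (G : SimpleGraph (Fin n)) :
    Matrix (Fin n) (Fin n) ℝ :=
  letI := Classical.decRel G.Adj
  Matrix.diagonal (fun v => (G.degree v : ℝ)) + G.adjMatrix ℝ

def IsMaxEigenvalue {n : ℕ} (M : Matrix (Fin n) (Fin n) ℝ) (q : ℝ) : Prop :=
  (∃ x : Fin n → ℝ, x ≠ 0 ∧ M.mulVec x = q • x) ∧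
  ∀ (μ : ℝ) (x : Fin n → ℝ), x ≠ 0 → M.mulVec x = μ • x → μ ≤ q

theorem stmt0 {n : ℕ} (hn : 2 ≤ n) (G : SimpleGraph (Fin n)) (hconn : G.Connected)
    (m : ℕ) (hm : G.edgeSet.ncard = m)
    (q : ℝ) (hq : IsMaxEigenvalue (signlessLaplacian G) q) :
    q ≤ 2 * (m : ℝ) / ((n : ℝ) - 1) + (n : ℝ) - 2 := by
  classical
  letI : DecidableRel G.Adj := Classical.decRel G.Adj
  have hnR : (2:ℝ) ≤ (n:ℝ) := by exact_mod_cast hn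
  have hn1 : (0:ℝ) < (n:ℝ) - 1 := by linarith
  rcases le_or_gt q 0 with hq0 | hq0
  · have h1 : (0:ℝ) ≤ 2 * (m:ℝ) / ((n:ℝ) - 1) :=
      div_nonneg (by positivity) hn1.le
    linarith
  -- degrees are positive
  have hdeg : ∀ v : Fin n, 0 < G.degree v := by
    intro v
    rw [G.degree_pos_iff_exists_adj]
    obtain ⟨w, hw⟩ := Fintype.exists_ne_of_one_lt_card (by simp; omega) v
    obtain ⟨p⟩ := hconn.preconnected v w
    cases p with
    | nil => exact absurd rfl hw
    | cons h _ => exact ⟨_, h⟩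
  have hm' : #G.edgeFinset = m := by
    rw [← hm, Set.ncard_eq_toFinset_card']
    exact congrArg Finset.card (by ext; simp)
  have h2m : ∑ v, G.degree v = 2 * m := by
    rw [G.sum_degrees_eq_twice_card_edges, hm']
  -- combinatorial bounds
  have key1 : ∀ u : Fin n, (∑ v ∈ G.neighborFinset u, G.degree v) + (n - 1) ≤ 2 * m := by
    intro u
    have hu : u ∈ (G.neighborFinset u)ᶜ := by simp
    have hsplit := Finset.sum_add_sum_compl (G.neighborFinset u) (fun v => G.degree v)
    have h1 : ∑ v ∈ (G.neighborFinset u)ᶜ, G.degree v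
        = G.degree u + ∑ v ∈ ((G.neighborFinset u)ᶜ).erase u, G.degree v :=
      (Finset.add_sum_erase _ _ hu).symm
    have h2 : #(((G.neighborFinset u)ᶜ).erase u) ≤ ∑ v ∈ ((G.neighborFinset u)ᶜ).erase u, G.degree v := by
      calc #(((G.neighborFinset u)ᶜ).erase u) = ∑ _v ∈ ((G.neighborFinset u)ᶜ).erase u, 1 := by
            simp
        _ ≤ _ := Finset.sum_le_sum (fun i _ => hdeg i)
    have h3 : #(((G.neighborFinset u)ᶜ).erase u) = n - G.degree u - 1 := by
      rw [Finset.card_erase_of_mem hu, Finset.card_compl, G.card_neighborFinset_eq_degree]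
      simp
    have h4 : G.degree u < n := by
      have := G.degree_lt_card_verts u; simpa using this
    omega
  have key2 : ∀ u : Fin n, (∑ v ∈ G.neighborFinset u, G.degree v) ≤ G.degree u * (n - 1) := by
    intro u
    calc (∑ v ∈ G.neighborFinset u, G.degree v) ≤ ∑ _v ∈ G.neighborFinset u, (n-1) :=
          Finset.sum_le_sum (fun i _ => by have := G.degree_lt_card_verts i; simp at this; omega)
      _ = G.degree u * (n-1) := by rw [Finset.sum_const, G.card_neighborFinset_eq_degree, smul_eq_mul]
  -- eigen equation
  obtain ⟨⟨x, hx0, hxq⟩, -⟩ := hq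
  have key : ∀ u : Fin n, q * x u = (G.degree u : ℝ) * x u + ∑ v ∈ G.neighborFinset u, x v := by
    intro u
    have h := congrFun hxq u
    simp only [signlessLaplacian, add_mulVec, Pi.add_apply, mulVec_diagonal,
      adjMatrix_mulVec_apply, Pi.smul_apply, smul_eq_mul] at h
    exact h.symm
  -- pick maximizing vertex
  have hne : Nonempty (Fin n) := ⟨⟨0, by omega⟩⟩
  obtain ⟨u, -, hmax⟩ := Finset.exists_max_image Finset.univ
    (fun v => |x v| / (G.degree v : ℝ)) Finset.univ_nonempty
  set d : ℝ := (G.degree u : ℝ) with hd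
  have hd0 : (0:ℝ) < d := by rw [hd]; exact_mod_cast hdeg u
  set Y : ℝ := |x u| / d with hY
  have hYpos : 0 < Y := by
    obtain ⟨v0, hv0⟩ : ∃ v, x v ≠ 0 := by
      by_contra hc
      push_neg at hc
      exact hx0 (funext hc)
    have hdv : (0:ℝ) < (G.degree v0 : ℝ) := by exact_mod_cast hdeg v0
    have := hmax v0 (Finset.mem_univ v0)
    have h1 : 0 < |x v0| / (G.degree v0 : ℝ) := div_pos (abs_pos.2 hv0) hdv
    exact lt_of_lt_of_le h1 this
  set SR : ℝ := ∑ v ∈ G.neighborFinset u, (G.degree v : ℝ) with hSR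
  -- bound the sum
  have hsum : |∑ v ∈ G.neighborFinset u, x v| ≤ Y * SR := by
    calc |∑ v ∈ G.neighborFinset u, x v| ≤ ∑ v ∈ G.neighborFinset u, |x v| :=
          Finset.abs_sum_le_sum_abs _ _
      _ ≤ ∑ v ∈ G.neighborFinset u, Y * (G.degree v : ℝ) := by
          apply Finset.sum_le_sum
          intro v _
          have hdv : (0:ℝ) < (G.degree v : ℝ) := by exact_mod_cast hdeg v
          have := hmax v (Finset.mem_univ v)
          calc |x v| = (|x v| / (G.degree v : ℝ)) * (G.degree v : ℝ) := by
                field_simp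
            _ ≤ Y * (G.degree v : ℝ) := by
                apply mul_le_mul_of_nonneg_right this hdv.le
      _ = Y * SR := by rw [hSR, Finset.mul_sum]
  have hxu : |x u| = Y * d := by rw [hY]; field_simp
  have hqd : q * d ≤ d * d + SR := by
    have h1 : q * |x u| ≤ d * |x u| + Y * SR := by
      have h2 : q * x u - d * x u = ∑ v ∈ G.neighborFinset u, x v := by
        have := key u; linarith
      have h3 : |q * x u - d * x u| ≤ Y * SR := by rw [h2]; exact hsum
      have h4 : q * x u - d * x u ≤ |q * x u - d * x u| := le_abs_self _
      have h5 : -(q * x u - d * x u) ≤ |q * x u - d * x u| := neg_le_abs _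
      rcases abs_cases (x u) with ⟨he, -⟩ | ⟨he, -⟩ <;> nlinarith [hq0, hd0]
    rw [hxu] at h1
    have h6 : Y * (q * d) ≤ Y * (d * d + SR) := by ring_nf; ring_nf at h1; linarith
    exact le_of_mul_le_mul_left h6 hYpos
  -- cast combinatorial bounds
  have hd1 : (1:ℝ) ≤ d := by rw [hd]; exact_mod_cast hdeg u
  have hd2 : d ≤ (n:ℝ) - 1 := by
    have := G.degree_lt_card_verts u
    simp only [Fintype.card_fin] at this
    rw [hd]
    have : (G.degree u : ℝ) + 1 ≤ (n : ℝ) := by exact_mod_cast this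
    linarith
  have hS1 : SR ≤ 2 * (m:ℝ) - ((n:ℝ) - 1) := by
    have h := key1 u
    have h2 : ((n - 1 : ℕ) : ℝ) = (n:ℝ) - 1 := by
      have h3 : 1 ≤ n := by omega
      push_cast [h3]; ring
    have h1 : ((∑ v ∈ G.neighborFinset u, G.degree v : ℕ) : ℝ) + ((n:ℝ) - 1) ≤ 2 * (m:ℝ) := by
      rw [← h2]
      exact_mod_cast h
    rw [hSR]
    push_cast at h1
    linarith
  have hS2 : SR ≤ d * ((n:ℝ) - 1) := by
    have h := key2 u
    have h2 : (((n - 1 : ℕ)) : ℝ) = (n:ℝ) - 1 := by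
      have : 1 ≤ n := by omega
      push_cast [this]; ring
    rw [hSR, hd]
    calc (∑ v ∈ G.neighborFinset u, (G.degree v : ℝ)) = ((∑ v ∈ G.neighborFinset u, G.degree v : ℕ) : ℝ) := by push_cast; rfl
      _ ≤ ((G.degree u * (n-1) : ℕ) : ℝ) := by exact_mod_cast h
      _ = (G.degree u : ℝ) * ((n:ℝ) - 1) := by push_cast [show 1 ≤ n by omega]; ring
  -- final algebra
  rw [show 2 * (m:ℝ) / ((n:ℝ) - 1) + (n:ℝ) - 2
      = (2 * (m:ℝ) + ((n:ℝ) - 2) * ((n:ℝ) - 1)) / ((n:ℝ) - 1) from by field_simp; ring,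
    le_div_iff₀ hn1]
  nlinarith [mul_nonneg (sub_nonneg.2 hS1) hd0.le,
    mul_nonneg (sub_nonneg.2 hS2) (sub_nonneg.2 hd2),
    mul_le_mul_of_nonneg_right hqd hn1.le, hd1, hq0]
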